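/- (Lemma 4.2(i)) If αA_low ≤ α ≤ αA_high, then the map (z,γ) ↦ H(α,z,γ) attains its global maximum over ℝ² at the point (z*(α), 0), i.e. H(α,z,γ) ≤ H(α, z*(α), 0) for all z, γ ∈ ℝ. -/
import Mathlib


/-- The map `H(α,z,γ)` of Section 4, with quadratic cost `k(a) = k a²/2`. -/
noncomputable def Hfun (R_A R_P k αAlow αAhigh : ℝ) (α z γ : ℝ) : ℝ :=
  z / k - z ^ 2 / (2 * k) - α / 2 * (R_A * z ^ 2 + R_P * (1 - z) ^ 2) - α / 2 * γ
    + sInf ((fun α' => α' * γ / 2) '' Set.Icc αAlow αAhigh)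

/-- The optimal sensitivity `z*(α)`. -/
noncomputable def zStar (R_A R_P k α : ℝ) : ℝ :=
  (1 + k * α * R_P) / (1 + α * k * (R_A + R_P))

/-- Lemma 4.2(i): if `αA_low ≤ α ≤ αA_high`, then `(z,γ) ↦ H(α,z,γ)` attains its
global maximum at `(z*(α), 0)`. -/
theorem H_max_inside (R_A R_P k αAlow αAhigh : ℝ)
    (hRA : 0 < R_A) (hRP : 0 < R_P) (hk : 0 < k)
    (hlow : 0 < αAlow) (hle : αAlow ≤ αAhigh)
    (α : ℝ) (hα₁ : αAlow ≤ α) (hα₂ : α ≤ αAhigh) :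
    ∀ z γ : ℝ, Hfun R_A R_P k αAlow αAhigh α z γ
      ≤ Hfun R_A R_P k αAlow αAhigh α (zStar R_A R_P k α) 0 := by
  intro z γ
  have hαpos : 0 < α := lt_of_lt_of_le hlow hα₁
  have hne : (Set.Icc αAlow αAhigh).Nonempty := Set.nonempty_Icc.mpr hle
  -- sInf at γ = 0 equals 0
  have h0 : sInf ((fun α' => α' * (0:ℝ) / 2) '' Set.Icc αAlow αAhigh) = 0 := by
    have : ((fun α' => α' * (0:ℝ) / 2) '' Set.Icc αAlow αAhigh) = {0} := by
      have := Set.Nonempty.image_const hne (0:ℝ)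
      simpa [mul_zero, zero_div] using this
    rw [this, csInf_singleton]
  -- sInf at γ is ≤ α * γ / 2
  have hbdd : BddBelow ((fun α' => α' * γ / 2) '' Set.Icc αAlow αAhigh) := by
    have hc : Continuous fun α' : ℝ => α' * γ / 2 := by continuity
    exact (isCompact_Icc.image hc).bddBelow
  have hinf : sInf ((fun α' => α' * γ / 2) '' Set.Icc αAlow αAhigh) ≤ α * γ / 2 :=
    csInf_le hbdd ⟨α, Set.mem_Icc.mpr ⟨hα₁, hα₂⟩, rfl⟩
  -- the quadratic part
  set D := 1 + α * k * (R_A + R_P) with hD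
  have hDpos : 0 < D := by positivity
  have hquad : z / k - z ^ 2 / (2 * k) - α / 2 * (R_A * z ^ 2 + R_P * (1 - z) ^ 2)
      ≤ zStar R_A R_P k α / k - (zStar R_A R_P k α) ^ 2 / (2 * k)
        - α / 2 * (R_A * (zStar R_A R_P k α) ^ 2 + R_P * (1 - zStar R_A R_P k α) ^ 2) := by
    rw [zStar, ← sub_nonneg]
    have key : (1 + k * α * R_P) / D / k - ((1 + k * α * R_P) / D) ^ 2 / (2 * k)
        - α / 2 * (R_A * ((1 + k * α * R_P) / D) ^ 2 + R_P * (1 - (1 + k * α * R_P) / D) ^ 2)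
        - (z / k - z ^ 2 / (2 * k) - α / 2 * (R_A * z ^ 2 + R_P * (1 - z) ^ 2))
        = D / (2 * k) * (z - (1 + k * α * R_P) / D) ^ 2 := by
      field_simp
      ring
    rw [key]
    positivity
  simp only [Hfun]
  rw [h0, mul_zero, sub_zero, add_zero]
  have : z / k - z ^ 2 / (2 * k) - α / 2 * (R_A * z ^ 2 + R_P * (1 - z) ^ 2) - α / 2 * γ
      + sInf ((fun α' => α' * γ / 2) '' Set.Icc αAlow αAhigh)
      ≤ z / k - z ^ 2 / (2 * k) - α / 2 * (R_A * z ^ 2 + R_P * (1 - z) ^ 2) := by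
    nlinarith [hinf]
  linarith [hquad]
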